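/- (Step of Lemma 3: the inverse of a Lax-pair solution solves the adjoint Lax equations.) Fix a positive integer N. Let Q, P, 𝓕 : ℤ × ℝ → M_N(ℂ) take diagonal-matrix values, with 𝓕(n,t) invertible and 𝓕(n,t)² = I_N − Q(n,t)P(n,t) for all n, t. Set F(n,t) = diag(𝓕(n,t), 𝓕(n,t)) and U(n,t) = [[0, Q(n,t)],[P(n,t), 0]] (2N×2N block matrices), and let V(n,t,z) = i ( U(n−1,t) Z − U(n,t) Z^{−1} − (1/2)(U(n,t)U(n−1,t) + U(n−1,t)U(n,t)) ) Σ₃. Suppose μ : ℤ × ℝ × (ℂ∖{0}) → M_{2N}(ℂ) is invertible for all (n,t,z), differentiable in t, and satisfies F(n,t) μ(n+1,t,z) = Z μ(n,t,z) Z^{−1} + U(n,t) μ(n,t,z) Z^{−1} and ∂_t μ(n,t,z) = i ω(z)(Σ₃ μ − μ Σ₃) + V(n,t,z) μ(n,t,z). Then Φ := μ^{−1} satisfies Φ(n+1,t,z) F(n,t) = Z Φ(n,t,z) Z^{−1} − Z Φ(n,t,z) U(n,t) and ∂_t Φ(n,t,z) = i ω(z)(Σ₃ Φ − Φ Σ₃)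 − Φ(n,t,z) V(n,t,z), for all n, t and z ≠ 0. -/

import Mathlib

noncomputable section

open Matrix

variable {N : ℕ}

/-- `Z = diag(z I_N, z⁻¹ I_N)`. -/
def Zb (N : ℕ) (z : ℂ) : Matrix (Fin N ⊕ Fin N) (Fin N ⊕ Fin N) ℂ :=
  Matrix.fromBlocks (z • 1) 0 0 (z⁻¹ • 1)

/-- `Σ₃ = diag(I_N, −I_N)`. -/
def Sigma3b (N : ℕ) : Matrix (Fin N ⊕ Fin N) (Fin N ⊕ Fin N) ℂ :=
  Matrix.fromBlocks 1 0 0 (-1)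

/-- `ω(z) = (1/2)(z − z⁻¹)²`. -/
def omega (z : ℂ) : ℂ := (1 / 2 : ℂ) * (z - z⁻¹) ^ 2

/-- `F(n,t) = diag(𝓕(n,t), 𝓕(n,t))`. -/
def Fblk (Fd : ℤ → ℝ → Matrix (Fin N) (Fin N) ℂ) (n : ℤ) (t : ℝ) :
    Matrix (Fin N ⊕ Fin N) (Fin N ⊕ Fin N) ℂ :=
  Matrix.fromBlocks (Fd n t) 0 0 (Fd n t)

/-- `U(n,t) = [[0, Q(n,t)],[P(n,t), 0]]`. -/
def Ublk (Q P : ℤ → ℝ → Matrix (Fin N) (Fin N) ℂ) (n : ℤ) (t : ℝ) :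
    Matrix (Fin N ⊕ Fin N) (Fin N ⊕ Fin N) ℂ :=
  Matrix.fromBlocks 0 (Q n t) (P n t) 0

/-- `V(n,t,z) = i (U(n−1,t)Z − U(n,t)Z⁻¹ − (1/2)(U(n,t)U(n−1,t) + U(n−1,t)U(n,t))) Σ₃`. -/
def Vblk (Q P : ℤ → ℝ → Matrix (Fin N) (Fin N) ℂ) (n : ℤ) (t : ℝ) (z : ℂ) :
    Matrix (Fin N ⊕ Fin N) (Fin N ⊕ Fin N) ℂ :=
  Complex.I • ((Ublk Q P (n - 1) t * Zb N z - Ublk Q P n t * (Zb N z)⁻¹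
    - (1 / 2 : ℂ) • (Ublk Q P n t * Ublk Q P (n - 1) t
      + Ublk Q P (n - 1) t * Ublk Q P n t)) * Sigma3b N)


lemma isDiag_mul_comm {N : ℕ} {A B : Matrix (Fin N) (Fin N) ℂ} (hA : A.IsDiag)
    (hB : B.IsDiag) : A * B = B * A := by
  rw [← hA.diagonal_diag, ← hB.diagonal_diag, diagonal_mul_diagonal, diagonal_mul_diagonal]
  simp only [mul_comm]

lemma Zb_mul_Zb {N : ℕ} (z : ℂ) (hz : z ≠ 0) : Zb N z * Zb N z⁻¹ = 1 := by
  simp [Zb, fromBlocks_multiply, smul_smul, mul_inv_cancel₀ hz, inv_mul_cancel₀ hz,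
    fromBlocks_one]

lemma Zb_inv {N : ℕ} (z : ℂ) (hz : z ≠ 0) : (Zb N z)⁻¹ = Zb N z⁻¹ :=
  inv_eq_right_inv (Zb_mul_Zb z hz)

lemma Zb'_mul_Zb {N : ℕ} (z : ℂ) (hz : z ≠ 0) : Zb N z⁻¹ * Zb N z = 1 := by
  simpa using Zb_mul_Zb (N := N) z⁻¹ (inv_ne_zero hz)

lemma blockKey {N : ℕ} (Q P Fd : Matrix (Fin N) (Fin N) ℂ) (hc : P * Q = Q * P)
    (hFsq : Fd ^ 2 = 1 - Q * P) (z : ℂ) (hz : z ≠ 0) :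
    (Zb N z + Matrix.fromBlocks 0 Q P 0) * (Zb N z⁻¹ - Matrix.fromBlocks 0 Q P 0)
      = Matrix.fromBlocks Fd 0 0 Fd * Matrix.fromBlocks Fd 0 0 Fd := by
  have hFF : Fd * Fd = 1 - Q * P := by rw [← pow_two, hFsq]
  have h1 : (Zb N z + Matrix.fromBlocks 0 Q P 0)
      = Matrix.fromBlocks (z • 1) Q P (z⁻¹ • 1) := by
    rw [Zb, fromBlocks_add, add_zero, add_zero, zero_add, zero_add]
  have h2 : (Zb N z⁻¹ - Matrix.fromBlocks 0 Q P 0)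
      = Matrix.fromBlocks (z⁻¹ • 1) (-Q) (-P) (z • 1) := by
    rw [Zb, inv_inv, sub_eq_add_neg, fromBlocks_neg, fromBlocks_add]
    simp
  have hTL : (z • 1) * (z⁻¹ • (1 : Matrix (Fin N) (Fin N) ℂ)) + Q * (-P) = 1 - Q * P := by
    rw [smul_mul_smul_comm, one_mul, mul_inv_cancel₀ hz, one_smul, mul_neg, ← sub_eq_add_neg]
  have hTR : (z • (1 : Matrix (Fin N) (Fin N) ℂ)) * (-Q) + Q * (z • 1) = 0 := by
    simp [smul_mul_assoc, mul_smul_comm]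
  have hBL : P * (z⁻¹ • (1 : Matrix (Fin N) (Fin N) ℂ)) + (z⁻¹ • 1) * (-P) = 0 := by
    simp [smul_mul_assoc, mul_smul_comm]
  have hBR : P * (-Q) + (z⁻¹ • (1 : Matrix (Fin N) (Fin N) ℂ)) * (z • 1) = 1 - Q * P := by
    rw [mul_neg, hc, smul_mul_smul_comm, one_mul, inv_mul_cancel₀ hz, one_smul, sub_eq_neg_add]
  rw [h1, h2, fromBlocks_multiply, fromBlocks_multiply, hTL, hTR, hBL, hBR]
  simp [hFF]

lemma hasDerivAt_matrix_inv {m : Type*} [Fintype m] [DecidableEq m]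
    (f : ℝ → Matrix m m ℂ) (f' : Matrix m m ℂ) (t : ℝ) (hu : IsUnit (f t))
    (h : ∀ i j, HasDerivAt (fun s => f s i j) (f' i j) t) (i j : m) :
    HasDerivAt (fun s => (f s)⁻¹ i j) ((-((f t)⁻¹ * f' * (f t)⁻¹)) i j) t := by
  letI : NormedRing (Matrix m m ℂ) := Matrix.linftyOpNormedRing
  letI : NormedAlgebra ℝ (Matrix m m ℂ) := Matrix.linftyOpNormedAlgebra
  letI : NormedAlgebra ℂ (Matrix m m ℂ) := Matrix.linftyOpNormedAlgebra
  haveI : CompleteSpace (Matrix m m ℂ) := FiniteDimensional.complete ℝ _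
  have hrep : ∀ (A : Matrix m m ℂ),
      A = ∑ p : m × m, A p.1 p.2 • single p.1 p.2 (1 : ℂ) := by
    intro A
    calc A = ∑ a : m, ∑ b : m, single a b (A a b) :=
        matrix_eq_sum_single A
      _ = ∑ p : m × m, A p.1 p.2 • single p.1 p.2 (1 : ℂ) := by
        rw [Fintype.sum_prod_type]
        refine Finset.sum_congr rfl fun a _ => Finset.sum_congr rfl fun b _ => ?_
        rw [smul_single, smul_eq_mul, mul_one]
  have hf : HasDerivAt f f' t := by
    have hsum : HasDerivAt (fun s => ∑ p : m × m, f s p.1 p.2 • single p.1 p.2 (1 : ℂ))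
        (∑ p : m × m, f' p.1 p.2 • single p.1 p.2 (1 : ℂ)) t :=
      HasDerivAt.fun_sum fun p _ => HasDerivAt.smul_const (h p.1 p.2) (single p.1 p.2 (1 : ℂ))
    convert hsum using 1
    · funext s; exact hrep (f s)
    · exact hrep f'
  have h0 : HasFDerivAt Ring.inverse
      (-ContinuousLinearMap.mulLeftRight ℝ (Matrix m m ℂ) ((f t)⁻¹) ((f t)⁻¹)) (f t) := by
    have h1 := hasFDerivAt_ringInverse (𝕜 := ℝ) hu.unit
    simpa [Matrix.coe_units_inv, hu.unit_spec] using h1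
  have hinv : HasDerivAt (fun s => Ring.inverse (f s)) (-((f t)⁻¹ * f' * (f t)⁻¹)) t := by
    have h2 := h0.comp_hasDerivAt t hf
    rw [show -((f t)⁻¹ * f' * (f t)⁻¹) = (-ContinuousLinearMap.mulLeftRight ℝ (Matrix m m ℂ) ((f t)⁻¹) ((f t)⁻¹)) f' by simp [mul_assoc]]
    exact h2
  have hinv' : HasDerivAt (fun s => (f s)⁻¹) (-((f t)⁻¹ * f' * (f t)⁻¹)) t := by
    simpa only [Matrix.nonsing_inv_eq_ringInverse] using hinv
  let L : Matrix m m ℂ →ₗ[ℝ] ℂ :=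
    { toFun := fun A => A i j, map_add' := fun _ _ => rfl, map_smul' := fun _ _ => rfl }
  exact (L.toContinuousLinearMap.hasFDerivAt).comp_hasDerivAt t hinv'

lemma invDerivAlgebra {m : Type*} [Fintype m] [DecidableEq m]
    (B S V : Matrix m m ℂ) (c : ℂ) (hd : IsUnit B.det) :
    -(B⁻¹ * (c • (S * B - B * S) + V * B) * B⁻¹)
      = c • (S * B⁻¹ - B⁻¹ * S) - B⁻¹ * V := by
  have h1 : B⁻¹ * (c • (S * B - B * S) + V * B) * B⁻¹
      = c • (B⁻¹ * S - S * B⁻¹) + B⁻¹ * V := by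
    rw [mul_add, add_mul, mul_smul_comm, smul_mul_assoc, mul_sub, sub_mul]
    rw [show B⁻¹ * (S * B) * B⁻¹ = B⁻¹ * S from by
      rw [← mul_assoc, mul_nonsing_inv_cancel_right _ _ hd]]
    rw [show B⁻¹ * (B * S) * B⁻¹ = S * B⁻¹ from by
      rw [nonsing_inv_mul_cancel_left _ _ hd]]
    rw [show B⁻¹ * (V * B) * B⁻¹ = B⁻¹ * V from by
      rw [← mul_assoc, mul_nonsing_inv_cancel_right _ _ hd]]
  rw [h1, neg_add, ← smul_neg, neg_sub, ← sub_eq_add_neg]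

/-- Step of Lemma 3: the inverse `Φ = μ⁻¹` of an invertible solution of the Lax pair
solves the adjoint Lax equations. -/
theorem stmt15 (N : ℕ) (hN : 0 < N)
    (Q P Fd : ℤ → ℝ → Matrix (Fin N) (Fin N) ℂ)
    (hQ : ∀ n t, (Q n t).IsDiag) (hP : ∀ n t, (P n t).IsDiag)
    (hFd : ∀ n t, (Fd n t).IsDiag)
    (hFinv : ∀ n t, IsUnit (Fd n t))
    (hFsq : ∀ n t, (Fd n t) ^ 2 = 1 - Q n t * P n t)
    (μ : ℤ → ℝ → ℂ → Matrix (Fin N ⊕ Fin N) (Fin N ⊕ Fin N) ℂ)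
    (hμinv : ∀ n t z, IsUnit (μ n t z))
    (hS : ∀ (n : ℤ) (t : ℝ) (z : ℂ), z ≠ 0 →
      Fblk Fd n t * μ (n + 1) t z =
        Zb N z * μ n t z * (Zb N z)⁻¹ + Ublk Q P n t * μ n t z * (Zb N z)⁻¹)
    (hT : ∀ (n : ℤ) (z : ℂ), z ≠ 0 → ∀ (t : ℝ) (i j : Fin N ⊕ Fin N),
      HasDerivAt (fun s => μ n s z i j)
        (((Complex.I * omega z) • (Sigma3b N * μ n t z - μ n t z * Sigma3b N)
          + Vblk Q P n t z * μ n t z) i j) t) :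
    ∀ (n : ℤ) (t : ℝ) (z : ℂ), z ≠ 0 →
      ((μ (n + 1) t z)⁻¹ * Fblk Fd n t =
        Zb N z * (μ n t z)⁻¹ * (Zb N z)⁻¹ - Zb N z * (μ n t z)⁻¹ * Ublk Q P n t) ∧
      (∀ i j : Fin N ⊕ Fin N,
        HasDerivAt (fun s => (μ n s z)⁻¹ i j)
          (((Complex.I * omega z) • (Sigma3b N * (μ n t z)⁻¹ - (μ n t z)⁻¹ * Sigma3b N)
            - (μ n t z)⁻¹ * Vblk Q P n t z) i j) t) := by
  intro n t z hz
  have hdA : IsUnit (μ (n + 1) t z).det := (isUnit_iff_isUnit_det _).mp (hμinv _ _ _)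
  have hdB : IsUnit (μ n t z).det := (isUnit_iff_isUnit_det _).mp (hμinv _ _ _)
  have hdF : IsUnit (Fblk Fd n t).det := by
    refine isUnit_det_of_right_inverse
      (B := Matrix.fromBlocks (Fd n t)⁻¹ 0 0 (Fd n t)⁻¹) ?_
    rw [Fblk, fromBlocks_multiply]
    simp [Matrix.mul_nonsing_inv _ ((isUnit_iff_isUnit_det _).mp (hFinv n t)), fromBlocks_one]
  have hZ'Z : Zb N z⁻¹ * Zb N z = 1 := Zb'_mul_Zb z hz
  have hKey : (Zb N z + Ublk Q P n t) * (Zb N z⁻¹ - Ublk Q P n t)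
      = Fblk Fd n t * Fblk Fd n t :=
    blockKey (Q n t) (P n t) (Fd n t) (isDiag_mul_comm (hP n t) (hQ n t)) (hFsq n t) z hz
  have hFA : Fblk Fd n t * μ (n + 1) t z
      = (Zb N z + Ublk Q P n t) * μ n t z * Zb N z⁻¹ := by
    rw [hS n t z hz, Zb_inv z hz, add_mul, add_mul]
  have hstep : μ (n + 1) t z * (Zb N z * (μ n t z)⁻¹ * (Zb N z⁻¹ - Ublk Q P n t))
      = Fblk Fd n t := by
    have hA_eq : μ (n + 1) t z
        = (Fblk Fd n t)⁻¹ * ((Zb N z + Ublk Q P n t) * μ n t z * Zb N z⁻¹) := by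
      rw [← hFA, nonsing_inv_mul_cancel_left _ _ hdF]
    rw [hA_eq]
    simp only [mul_assoc]
    rw [show Zb N z⁻¹ * (Zb N z * ((μ n t z)⁻¹ * (Zb N z⁻¹ - Ublk Q P n t)))
        = (μ n t z)⁻¹ * (Zb N z⁻¹ - Ublk Q P n t) from by rw [← mul_assoc, hZ'Z, one_mul]]
    rw [mul_nonsing_inv_cancel_left _ _ hdB]
    rw [hKey]
    exact nonsing_inv_mul_cancel_left _ _ hdF
  constructor
  · calc (μ (n + 1) t z)⁻¹ * Fblk Fd n t
        = Zb N z * (μ n t z)⁻¹ * (Zb N z⁻¹ - Ublk Q P n t) := by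
          rw [← hstep, nonsing_inv_mul_cancel_left _ _ hdA]
      _ = Zb N z * (μ n t z)⁻¹ * (Zb N z)⁻¹ - Zb N z * (μ n t z)⁻¹ * Ublk Q P n t := by
          rw [mul_sub, Zb_inv z hz]
  · intro i j
    have hM := hasDerivAt_matrix_inv (fun s => μ n s z)
      ((Complex.I * omega z) • (Sigma3b N * μ n t z - μ n t z * Sigma3b N)
        + Vblk Q P n t z * μ n t z) t (hμinv n t z) (fun a b => hT n z hz t a b) i j
    have heq := invDerivAlgebra (μ n t z) (Sigma3b N) (Vblk Q P n t z)
      (Complex.I * omega z) hdB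
    rw [← heq]
    exact hM

end
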